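/- Let N be a mixed binomial process with counting variable K having probability generating function ψ, independent of i.i.d. X_i ~ ν. Then for every f ∈ ℰ₊, the Laplace functional satisfies E[exp(−Nf)] = ψ(ν(e^{−f})), where Nf = ∑_{i=1}^{K} f(X_i). -/

import Mathlib

open MeasureTheory ProbabilityTheory

/-- Laplace functional of a mixed binomial process:
`E[exp(−Nf)] = ψ(ν e^{−f})`, where `ψ(t) = E[t^K]` is the pgf of `K`. -/
theorem stmt4
    {Ω : Type*} [MeasureSpace Ω] [IsProbabilityMeasure (ℙ : Measure Ω)]
    {E : Type*} [MeasurableSpace E]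
    (ν : Measure E) [IsProbabilityMeasure ν]
    (K : Ω → ℕ) (X : ℕ → Ω → E)
    (hK : Measurable K)
    (hX : ∀ i, Measurable (X i))
    (hlaw : ∀ i, Measure.map (X i) ℙ = ν)
    (hiid : iIndepFun X ℙ)
    (hKX : IndepFun K (fun ω i => X i ω) ℙ)
    (ψ : ℝ → ℝ) (hψ : ∀ t, ψ t = ∫ ω, t ^ (K ω) ∂ℙ)
    (f : E → ℝ) (hf : Measurable f) (hf0 : ∀ x, 0 ≤ f x) :
    ∫ ω, Real.exp (-(∑ i ∈ Finset.range (K ω), f (X i ω))) ∂ℙ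
      = ψ (∫ x, Real.exp (-(f x)) ∂ν) := by
  set t : ℝ := ∫ x, Real.exp (-(f x)) ∂ν with ht_def
  -- basic facts about t
  have hefm : Measurable fun x => Real.exp (-(f x)) := Real.measurable_exp.comp hf.neg
  have hef_le_one : ∀ x : E, Real.exp (-(f x)) ≤ 1 := fun x =>
    Real.exp_le_one_iff.mpr (neg_nonpos.mpr (hf0 x))
  have hef_int : Integrable (fun x => Real.exp (-(f x))) ν := by
    refine (integrable_const (1 : ℝ)).mono' hefm.aestronglyMeasurable ?_
    filter_upwards with x
    rw [Real.norm_eq_abs, abs_of_pos (Real.exp_pos _)]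
    exact hef_le_one x
  have ht0 : 0 ≤ t := integral_nonneg fun x => (Real.exp_pos _).le
  have ht1 : t ≤ 1 := by
    calc t ≤ ∫ _, (1 : ℝ) ∂ν := integral_mono hef_int (integrable_const 1) hef_le_one
    _ = 1 := by simp
  -- the composed random variables Y i = exp(-(f (X i)))
  set Y : ℕ → Ω → ℝ := fun i ω => Real.exp (-(f (X i ω))) with hY_def
  have hYmeas : ∀ i, Measurable (Y i) := fun i => hefm.comp (hX i)
  have hYiid : iIndepFun Y ℙ :=
    hiid.comp (fun _ x => Real.exp (-(f x))) (fun _ => hefm)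
  have hEY : ∀ i, ∫ ω, Y i ω ∂ℙ = t := by
    intro i
    rw [ht_def, ← hlaw i, integral_map (hX i).aemeasurable hefm.aestronglyMeasurable]
  -- expectation of products of the Y's
  have hprodmeas : ∀ n : ℕ, Measurable (∏ i ∈ Finset.range n, Y i) := by
    intro n
    have : (∏ i ∈ Finset.range n, Y i) = fun ω => ∏ i ∈ Finset.range n, Y i ω := by
      ext ω; simp
    rw [this]
    exact Finset.measurable_prod _ fun i _ => hYmeas i
  have hEprod : ∀ n : ℕ, ∫ ω, ∏ i ∈ Finset.range n, Y i ω ∂ℙ = t ^ n := by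
    intro n
    induction n with
    | zero => simp
    | succ n ih =>
      have hindep := hYiid.indepFun_prod_range_succ hYmeas n
      have := hindep.integral_mul_eq_mul_integral (hprodmeas n).aestronglyMeasurable
        (hYmeas n).aestronglyMeasurable
      have heq : (∫ ω, ∏ i ∈ Finset.range (n + 1), Y i ω ∂ℙ)
          = ∫ ω, ((∏ i ∈ Finset.range n, Y i) * Y n) ω ∂ℙ := by
        congr 1; ext ω; simp [Finset.prod_range_succ]
      rw [heq, this, hEY n]
      have : (∫ ω, (∏ i ∈ Finset.range n, Y i) ω ∂ℙ) = t ^ n := by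
        rw [← ih]; congr 1; ext ω; simp
      rw [this, pow_succ]
  -- the partition sets
  set s : ℕ → Set Ω := fun n => K ⁻¹' {n} with hs_def
  have hs : ∀ n, MeasurableSet (s n) := fun n => hK (measurableSet_singleton n)
  have hsd : Pairwise (Function.onFun Disjoint s) := fun m n hmn => by
    simp only [hs_def, Set.disjoint_left]
    rintro ω (hm : K ω = m) (hn : K ω = n)
    exact hmn (hm ▸ hn ▸ rfl)
  have hsU : (⋃ n, s n) = Set.univ := by
    ext ω; simp [hs_def]
  -- measurability and integrability of the integrand on the left
  have hsummeas : Measurable fun ω => ∑ i ∈ Finset.range (K ω), f (X i ω) := by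
    have h1 : Measurable fun p : Ω × ℕ => ∑ i ∈ Finset.range p.2, f (X i p.1) :=
      measurable_from_prod_countable_left fun n => by
        show Measurable fun x : Ω => ∑ i ∈ Finset.range n, f (X i x)
        exact Finset.measurable_sum _ fun i _ => hf.comp (hX i)
    exact h1.comp (measurable_id.prodMk hK)
  have hgmeas : Measurable fun ω => Real.exp (-(∑ i ∈ Finset.range (K ω), f (X i ω))) :=
    Real.measurable_exp.comp hsummeas.neg
  have hgint : Integrable (fun ω => Real.exp (-(∑ i ∈ Finset.range (K ω), f (X i ω)))) ℙ := by
    refine (integrable_const (1 : ℝ)).mono' hgmeas.aestronglyMeasurable ?_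
    filter_upwards with ω
    rw [Real.norm_eq_abs, abs_of_pos (Real.exp_pos _)]
    exact Real.exp_le_one_iff.mpr (neg_nonpos.mpr (Finset.sum_nonneg fun i _ => hf0 _))
  -- integrability of t ^ K
  have htKint : Integrable (fun ω => t ^ K ω) ℙ := by
    have h1 : Measurable fun p : Ω × ℕ => t ^ p.2 :=
      measurable_from_prod_countable_left fun n => by
        show Measurable fun _ : Ω => t ^ n
        exact measurable_const
    refine (integrable_const (1 : ℝ)).mono'
      (h1.comp (measurable_id.prodMk hK)).aestronglyMeasurable ?_
    filter_upwards with ω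
    rw [Real.norm_eq_abs, abs_of_nonneg (pow_nonneg ht0 _)]
    exact pow_le_one₀ ht0 ht1
  -- the key computation of each piece
  have hpiece : ∀ n : ℕ, ∫ ω in s n, Real.exp (-(∑ i ∈ Finset.range (K ω), f (X i ω))) ∂ℙ
      = (ℙ (s n)).toReal * t ^ n := by
    intro n
    -- on s n, the integrand equals the product over range n
    have hcongr : ∫ ω in s n, Real.exp (-(∑ i ∈ Finset.range (K ω), f (X i ω))) ∂ℙ
        = ∫ ω in s n, ∏ i ∈ Finset.range n, Y i ω ∂ℙ := by
      apply setIntegral_congr_fun (hs n)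
      intro ω hω
      have hKω : K ω = n := hω
      show Real.exp (-(∑ i ∈ Finset.range (K ω), f (X i ω))) = ∏ i ∈ Finset.range n, Y i ω
      rw [hKω,
        show (-(∑ i ∈ Finset.range n, f (X i ω))) = ∑ i ∈ Finset.range n, (-(f (X i ω)))
          from by rw [Finset.sum_neg_distrib], Real.exp_sum]
    rw [hcongr]
    -- rewrite as a full-space integral of a product of independent functions
    have hind : ∫ ω in s n, ∏ i ∈ Finset.range n, Y i ω ∂ℙ
        = ∫ ω, (Set.indicator {n} (1 : ℕ → ℝ) (K ω)) * ∏ i ∈ Finset.range n, Y i ω ∂ℙ := by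
      rw [← integral_indicator (hs n)]
      congr 1
      ext ω
      by_cases hω : K ω = n
      · simp [Set.indicator, hs_def, hω]
      · simp [Set.indicator, hs_def, hω]
    rw [hind]
    -- independence of the two factors
    have hφ : Measurable (Set.indicator {n} (1 : ℕ → ℝ)) :=
      measurable_one.indicator (measurableSet_singleton n)
    have hG : Measurable fun v : ℕ → E => ∏ i ∈ Finset.range n, Real.exp (-(f (v i))) :=
      Finset.measurable_prod _ fun i _ => hefm.comp (measurable_pi_apply i)
    have hindep : IndepFun (fun ω => Set.indicator {n} (1 : ℕ → ℝ) (K ω))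
        (fun ω => ∏ i ∈ Finset.range n, Y i ω) ℙ :=
      hKX.comp hφ hG
    have hFnmeas : Measurable fun ω => ∏ i ∈ Finset.range n, Y i ω :=
      Finset.measurable_prod _ fun i _ => hYmeas i
    rw [hindep.integral_fun_mul_eq_mul_integral (hφ.comp hK).aestronglyMeasurable hFnmeas.aestronglyMeasurable]
    congr 1
    · have : (fun ω => Set.indicator {n} (1 : ℕ → ℝ) (K ω))
          = Set.indicator (s n) (fun _ => (1 : ℝ)) := by
        ext ω
        by_cases hω : K ω = n
        · simp [Set.indicator, hs_def, hω]
        · simp [Set.indicator, hs_def, hω]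
      rw [this]
      exact integral_indicator_one (hs n)
    · exact hEprod n
  -- putting things together
  have hLHS : ∫ ω, Real.exp (-(∑ i ∈ Finset.range (K ω), f (X i ω))) ∂ℙ
      = ∑' n, (ℙ (s n)).toReal * t ^ n := by
    rw [← setIntegral_univ (μ := ℙ), ← hsU,
      integral_iUnion hs hsd (hsU ▸ hgint.integrableOn)]
    exact tsum_congr hpiece
  have hRHS : ψ t = ∑' n, (ℙ (s n)).toReal * t ^ n := by
    rw [hψ t, ← setIntegral_univ (μ := ℙ), ← hsU,
      integral_iUnion hs hsd (hsU ▸ htKint.integrableOn)]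
    refine tsum_congr fun n => ?_
    have : ∫ ω in s n, t ^ K ω ∂ℙ = ∫ _ω in s n, t ^ n ∂ℙ := by
      apply setIntegral_congr_fun (hs n)
      intro ω hω
      have hKω : K ω = n := hω
      show t ^ K ω = t ^ n
      rw [hKω]
    rw [this, setIntegral_const, smul_eq_mul, measureReal_def]
  rw [hLHS, hRHS]
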